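/- Let λ ∈ ℂ ∪ {∞}. Define the symmetric bilinear form θ_A on W_A(λ) by θ_A(x, y) = (coefficient of A_0 in x)·(coefficient of A_0 in y), i.e., θ_A(A_0, A_0) = 1 and θ_A vanishes on all other pairs of basis vectors. Then θ_A is a Leibniz 2-cocycle on W_A(λ): θ_A([x,y],z) = θ_A(x,[y,z]) + θ_A([x,z],y) for all x, y, z. Moreover, there do not exist an alternating bilinear map Ω : W_A(λ) × W_A(λ) → ℂ and a linear map ψ : W_A(λ) → ℂ such that θ_A(x,y) = Ω(x,y) − ψ([x,y]) for all x, y ∈ W_A(λ); in particular θ_A defines a nontrivial Leibniz cohomology class not coming from Lie algebra cohomology. -/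

import Mathlib

/-- The coefficient `n(n+1)λ`, where `λ = ∞` (encoded by `none`) gives `n²`. -/
def lamTerm (lam : Option ℂ) (n : ℤ) : ℂ :=
  match lam with
  | some l => (n : ℂ) * ((n : ℂ) + 1) * l
  | none => (n : ℂ) ^ 2

lemma lamTerm_zero (lam : Option ℂ) : lamTerm lam 0 = 0 := by
  cases lam <;> simp [lamTerm]

/-- the symmetric bilinear form `θ_A(x, y) = (A_0-coefficient of x) ·
(A_0-coefficient of y)` on `W_A(λ)` is a Leibniz 2-cocycle, and it does not differ from an
alternating bilinear form by a Leibniz 2-coboundary `(x, y) ↦ ψ ⁅x, y⁆`. -/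
theorem stmt_13 (lam : Option ℂ) (L : Type) [LieRing L] [LieAlgebra ℂ L]
    (b : Module.Basis (ℤ ⊕ ℤ) ℂ L)
    (hLL : ∀ n m : ℤ,
      ⁅b (Sum.inl n), b (Sum.inl m)⁆ = ((m : ℂ) - (n : ℂ)) • b (Sum.inl (n + m)))
    (hLA : ∀ n m : ℤ,
      ⁅b (Sum.inl n), b (Sum.inr m)⁆ =
        ((n : ℂ) + (m : ℂ) + (if m = 0 then lamTerm lam n else 0)) • b (Sum.inr (n + m)))
    (hAA : ∀ n m : ℤ, ⁅b (Sum.inr n), b (Sum.inr m)⁆ = 0) :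
    (∀ x y z : L,
      b.repr ⁅x, y⁆ (Sum.inr 0) * b.repr z (Sum.inr 0) =
        b.repr x (Sum.inr 0) * b.repr ⁅y, z⁆ (Sum.inr 0) +
          b.repr ⁅x, z⁆ (Sum.inr 0) * b.repr y (Sum.inr 0)) ∧
    ¬∃ (Ω : L →ₗ[ℂ] L →ₗ[ℂ] ℂ) (ψ : L →ₗ[ℂ] ℂ),
      (∀ x : L, Ω x x = 0) ∧
      ∀ x y : L,
        b.repr x (Sum.inr 0) * b.repr y (Sum.inr 0) = Ω x y - ψ ⁅x, y⁆ := by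
  -- The bracket as a bilinear map into the A₀-coefficient
  let F : L →ₗ[ℂ] L →ₗ[ℂ] ℂ :=
    LinearMap.mk₂ ℂ (fun x y => b.repr ⁅x, y⁆ (Sum.inr 0))
      (fun x x' y => by simp [add_lie])
      (fun c x y => by simp [smul_lie])
      (fun x y y' => by simp [lie_add])
      (fun c x y => by simp [lie_smul])
  have hbasis : ∀ i j, b.repr ⁅b i, b j⁆ (Sum.inr 0) = 0 := by
    rintro (n | n) (m | m)
    · rw [hLL]
      simp [Finsupp.single_apply]
    · rw [hLA]
      simp only [map_smul, Module.Basis.repr_self, Finsupp.smul_single, smul_eq_mul, mul_one,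
        Finsupp.single_apply]
      by_cases h : n + m = 0
      · have hm : (m : ℂ) = -n := by
          have : m = -n := by omega
          simp [this]
        by_cases hm0 : m = 0
        · have hn0 : n = 0 := by omega
          simp [hm0, hn0, lamTerm_zero]
        · simp [hm0, hm, h]
      · simp [h, (by simpa using h : (Sum.inr (n + m) : ℤ ⊕ ℤ) ≠ Sum.inr 0)]
    · rw [← lie_skew, hLA]
      simp only [map_neg, map_smul, Module.Basis.repr_self, Finsupp.smul_single, smul_eq_mul, mul_one,
        Finsupp.single_apply, neg_eq_zero]
      by_cases h : m + n = 0
      · by_cases hn0 : n = 0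
        · have hm0 : m = 0 := by omega
          simp [hn0, hm0, lamTerm_zero]
        · have hn : (n : ℂ) = -m := by
            have : n = -m := by omega
            simp [this]
          simp [hn0, hn, h]
      · simp [h]
    · rw [hAA]; simp
  have hF : F = 0 := by
    apply b.ext
    intro i
    apply b.ext
    intro j
    simpa [F] using hbasis i j
  have key : ∀ x y : L, b.repr ⁅x, y⁆ (Sum.inr 0) = 0 := by
    intro x y
    have := congrArg (fun G => G x y) hF
    simpa [F] using this
  constructor
  · intro x y z
    simp [key]
  · rintro ⟨Ω, ψ, hΩ, heq⟩
    have := heq (b (Sum.inr 0)) (b (Sum.inr 0))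
    rw [lie_self, map_zero, hΩ] at this
    simp at this
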